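/- For all vectors z_1,…,z_9 ∈ ℂ^4 the following polynomial identity (a three-term cluster exchange relation) holds: ⟨1678⟩·⟨12*567*789⟩ = ⟨1278⟩·⟨1567⟩·⟨6789⟩ + ⟨1267⟩·⟨1789⟩·⟨5678⟩, where ⟨12*567*789⟩ denotes the chain polynomial with blocks (z_1,z_2), (z_5,z_6,z_7), (z_7,z_8,z_9). -/

import Mathlib

noncomputable section

/-- `⟨u₁ u₂ u₃ u₄⟩ = det[u₁ u₂ u₃ u₄]`: the determinant of the `4 × 4` complex matrix with
columns `u₁, u₂, u₃, u₄` in the listed order. -/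
def det4 (a b c d : Fin 4 → ℂ) : ℂ :=
  Matrix.det (Matrix.of fun i j => ![a, b, c, d] j i)

/-- The chain polynomial `⟨X * Y * U⟩` for blocks `X = (x₁,x₂)`, `Y = (y₁,y₂,y₃)`,
`U = (u₁,u₂,u₃)` of sizes `(2,3,3)`:
`Σ_{w ∈ S₃¹} sign(w)·det[x₁ x₂ y_{w(2)} y_{w(3)}]·det[y_{w(1)} u₁ u₂ u₃]`. -/
def chain233 (x1 x2 y1 y2 y3 u1 u2 u3 : Fin 4 → ℂ) : ℂ :=
  det4 x1 x2 y2 y3 * det4 y1 u1 u2 u3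
    - det4 x1 x2 y1 y3 * det4 y2 u1 u2 u3
    + det4 x1 x2 y1 y2 * det4 y3 u1 u2 u3

set_option maxHeartbeats 1000000 in
lemma det4_eq (a b c d : Fin 4 → ℂ) :
    det4 a b c d =
      a 0 * b 1 * c 2 * d 3 - a 0 * b 1 * c 3 * d 2 - a 0 * b 2 * c 1 * d 3
      + a 0 * b 2 * c 3 * d 1 + a 0 * b 3 * c 1 * d 2 - a 0 * b 3 * c 2 * d 1
      - a 1 * b 0 * c 2 * d 3 + a 1 * b 0 * c 3 * d 2 + a 1 * b 2 * c 0 * d 3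
      - a 1 * b 2 * c 3 * d 0 - a 1 * b 3 * c 0 * d 2 + a 1 * b 3 * c 2 * d 0
      + a 2 * b 0 * c 1 * d 3 - a 2 * b 0 * c 3 * d 1 - a 2 * b 1 * c 0 * d 3
      + a 2 * b 1 * c 3 * d 0 + a 2 * b 3 * c 0 * d 1 - a 2 * b 3 * c 1 * d 0
      - a 3 * b 0 * c 1 * d 2 + a 3 * b 0 * c 2 * d 1 + a 3 * b 1 * c 0 * d 2
      - a 3 * b 1 * c 2 * d 0 - a 3 * b 2 * c 0 * d 1 + a 3 * b 2 * c 1 * d 0 := by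
  simp [det4, Matrix.det_succ_row_zero, Fin.sum_univ_succ, Fin.succAbove]
  ring

set_option maxHeartbeats 1000000 in
lemma plucker1 (z1 z5 z6 z7 z8 z9 : Fin 4 → ℂ) :
    det4 z1 z6 z7 z8 * det4 z5 z7 z8 z9
      = det4 z1 z5 z7 z8 * det4 z6 z7 z8 z9 + det4 z1 z7 z8 z9 * det4 z5 z6 z7 z8 := by
  simp only [det4_eq]; ring

set_option maxHeartbeats 1000000 in
lemma plucker2 (z1 z2 z5 z6 z7 z8 : Fin 4 → ℂ) :
    det4 z1 z2 z6 z7 * det4 z1 z5 z7 z8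
      = det4 z1 z6 z7 z8 * det4 z1 z2 z5 z7 + det4 z1 z2 z7 z8 * det4 z1 z5 z6 z7 := by
  simp only [det4_eq]; ring

set_option maxHeartbeats 1000000 in
lemma chain233_eq (z1 z2 z5 z6 z7 z8 z9 : Fin 4 → ℂ) :
    chain233 z1 z2 z5 z6 z7 z7 z8 z9
      = det4 z1 z2 z6 z7 * det4 z5 z7 z8 z9 - det4 z1 z2 z5 z7 * det4 z6 z7 z8 z9 := by
  simp only [chain233, det4_eq]; ring

/-- For all vectors `z₁, …, z₉ ∈ ℂ⁴`, the three-term cluster exchange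
relation
`⟨1678⟩·⟨12 * 567 * 789⟩ = ⟨1278⟩·⟨1567⟩·⟨6789⟩ + ⟨1267⟩·⟨1789⟩·⟨5678⟩`
holds, where `⟨12 * 567 * 789⟩` is the chain polynomial with blocks `(z₁,z₂)`,
`(z₅,z₆,z₇)`, `(z₇,z₈,z₉)`. -/
theorem exchange_relation_1678 (z1 z2 z3 z4 z5 z6 z7 z8 z9 : Fin 4 → ℂ) :
    det4 z1 z6 z7 z8 * chain233 z1 z2 z5 z6 z7 z7 z8 z9
    = det4 z1 z2 z7 z8 * det4 z1 z5 z6 z7 * det4 z6 z7 z8 z9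
      + det4 z1 z2 z6 z7 * det4 z1 z7 z8 z9 * det4 z5 z6 z7 z8 := by
  rw [chain233_eq]
  linear_combination det4 z1 z2 z6 z7 * plucker1 z1 z5 z6 z7 z8 z9
    + det4 z6 z7 z8 z9 * plucker2 z1 z2 z5 z6 z7 z8

end
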